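/- Let x₀,…,xₘ ∈ ℂⁿ, X = [x₀ … x_{m−1}] with reduced SVD X = U Σ V*, Y = [x₁ … xₘ], S = U* Y V Σ^{−1}, and C_c the companion matrix to c = X⁺ xₘ. Then S = (Σ V*) C_c (V Σ^{−1}). In particular, if x₀,…,x_{m−1} are linearly independent (so r = m), then S and C_c are similar. -/

import Mathlib

open Matrix

def IsMoorePenrose {n m : ℕ} (X : Matrix (Fin n) (Fin m) ℂ)
    (P : Matrix (Fin m) (Fin n) ℂ) : Prop :=
  X * P * X = X ∧ P * X * P = P ∧ (X * P)ᴴ = X * P ∧ (P * X)ᴴ = P * X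

def companion {m : ℕ} (c : Fin m → ℂ) : Matrix (Fin m) (Fin m) ℂ :=
  Matrix.of fun i j =>
    if (j : ℕ) = m - 1 then c i else if (i : ℕ) = (j : ℕ) + 1 then 1 else 0

/-- Uniqueness of the Moore–Penrose pseudoinverse. -/
lemma mp_unique {n m : ℕ} {X : Matrix (Fin n) (Fin m) ℂ}
    {P Q : Matrix (Fin m) (Fin n) ℂ}
    (hP : IsMoorePenrose X P) (hQ : IsMoorePenrose X Q) : P = Q := by
  obtain ⟨hP1, hP2, hP3, hP4⟩ := hP
  obtain ⟨hQ1, hQ2, hQ3, hQ4⟩ := hQ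
  have key1 : P * Pᴴ * Xᴴ = P := by
    calc P * Pᴴ * Xᴴ = P * (X * P)ᴴ := by rw [conjTranspose_mul, Matrix.mul_assoc]
    _ = P * (X * P) := by rw [hP3]
    _ = P := by rw [← Matrix.mul_assoc, hP2]
  have hXh : Xᴴ = Xᴴ * (X * Q) := by
    conv_lhs => rw [← hQ1]
    rw [conjTranspose_mul, hQ3]
  have e1 : P = P * X * Q := by
    calc P = P * Pᴴ * Xᴴ := key1.symm
    _ = P * Pᴴ * (Xᴴ * (X * Q)) := by rw [← hXh]
    _ = P * Pᴴ * Xᴴ * (X * Q) := by simp only [Matrix.mul_assoc]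
    _ = P * (X * Q) := by rw [key1]
    _ = P * X * Q := by rw [Matrix.mul_assoc]
  have hXP : Xᴴ * Pᴴ = P * X := by rw [← conjTranspose_mul, hP4]
  have hXQh : Xᴴ * Qᴴ = Q * X := by rw [← conjTranspose_mul, hQ4]
  have hXh2 : Xᴴ = Xᴴ * Pᴴ * Xᴴ := by
    conv_lhs => rw [← hP1]
    rw [conjTranspose_mul, conjTranspose_mul, ← Matrix.mul_assoc]
  have e2 : Q = P * X * Q := by
    calc Q = Q * X * Q := hQ2.symm
    _ = (Q * X)ᴴ * Q := by rw [hQ4]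
    _ = Xᴴ * Qᴴ * Q := by rw [conjTranspose_mul]
    _ = Xᴴ * Pᴴ * Xᴴ * Qᴴ * Q := by rw [← hXh2]
    _ = (Xᴴ * Pᴴ) * ((Xᴴ * Qᴴ) * Q) := by
          simp only [Matrix.mul_assoc]
    _ = (P * X) * ((Q * X) * Q) := by rw [hXP, hXQh]
    _ = P * X * Q := by rw [hQ2]
  rw [e1, ← e2]

theorem stmt13 {n m r : ℕ} (x : Fin (m + 1) → Fin n → ℂ)
    (X Y : Matrix (Fin n) (Fin m) ℂ)
    (hX : X = Matrix.of fun i j => x j.castSucc i)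
    (hY : Y = Matrix.of fun i j => x j.succ i)
    (U : Matrix (Fin n) (Fin r) ℂ) (V : Matrix (Fin m) (Fin r) ℂ)
    (σ : Fin r → ℝ) (hσ : ∀ i, σ i ≠ 0)
    (Sig : Matrix (Fin r) (Fin r) ℂ)
    (hSig : Sig = Matrix.diagonal fun i => (σ i : ℂ))
    (hU : Uᴴ * U = 1) (hV : Vᴴ * V = 1)
    (hSVD : X = U * Sig * Vᴴ) (hr : X.rank = r)
    (P : Matrix (Fin m) (Fin n) ℂ) (hP : IsMoorePenrose X P)
    (S : Matrix (Fin r) (Fin r) ℂ) (hS : S = Uᴴ * Y * (V * Sig⁻¹))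
    (c : Fin m → ℂ) (hc : c = P.mulVec (x (Fin.last m))) :
    S = (Sig * Vᴴ) * companion c * (V * Sig⁻¹) ∧
      (LinearIndependent ℂ (fun j : Fin m => x j.castSucc) →
        ∃ (hrm : r = m) (T : Matrix (Fin m) (Fin m) ℂ),
          IsUnit T.det ∧
            Matrix.reindex (finCongr hrm) (finCongr hrm) S =
              T * companion c * T⁻¹) := by
  -- Σ is invertible
  have hdet : IsUnit Sig.det := by
    rw [hSig, Matrix.det_diagonal]
    refine isUnit_iff_ne_zero.mpr (Finset.prod_ne_zero_iff.mpr fun i _ => ?_)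
    exact Complex.ofReal_ne_zero.mpr (hσ i)
  have hS1 : Sig * Sig⁻¹ = 1 := Matrix.mul_nonsing_inv _ hdet
  have hS2 : Sig⁻¹ * Sig = 1 := Matrix.nonsing_inv_mul _ hdet
  -- the pseudoinverse Q = V Σ⁻¹ Uᴴ
  set Q : Matrix (Fin m) (Fin n) ℂ := V * Sig⁻¹ * Uᴴ with hQdef
  have hXQ : X * Q = U * Uᴴ := by
    rw [hSVD, hQdef]
    calc U * Sig * Vᴴ * (V * Sig⁻¹ * Uᴴ)
        = U * (Sig * ((Vᴴ * V) * (Sig⁻¹ * Uᴴ))) := by simp only [Matrix.mul_assoc]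
    _ = U * ((Sig * Sig⁻¹) * Uᴴ) := by rw [hV, Matrix.one_mul, Matrix.mul_assoc]
    _ = U * Uᴴ := by rw [hS1, Matrix.one_mul]
  have hQX : Q * X = V * Vᴴ := by
    rw [hSVD, hQdef]
    calc V * Sig⁻¹ * Uᴴ * (U * Sig * Vᴴ)
        = V * (Sig⁻¹ * ((Uᴴ * U) * (Sig * Vᴴ))) := by simp only [Matrix.mul_assoc]
    _ = V * ((Sig⁻¹ * Sig) * Vᴴ) := by rw [hU, Matrix.one_mul, Matrix.mul_assoc]
    _ = V * Vᴴ := by rw [hS2, Matrix.one_mul]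
  have hQmp : IsMoorePenrose X Q := by
    refine ⟨?_, ?_, ?_, ?_⟩
    · rw [hXQ]
      conv_lhs => rw [hSVD]
      calc U * Uᴴ * (U * Sig * Vᴴ) = U * ((Uᴴ * U) * (Sig * Vᴴ)) := by
            simp only [Matrix.mul_assoc]
      _ = U * (Sig * Vᴴ) := by rw [hU, Matrix.one_mul]
      _ = X := by rw [hSVD, Matrix.mul_assoc]
    · rw [hQX, hQdef]
      calc V * Vᴴ * (V * Sig⁻¹ * Uᴴ)
          = V * ((Vᴴ * V) * (Sig⁻¹ * Uᴴ)) := by simp only [Matrix.mul_assoc]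
      _ = V * (Sig⁻¹ * Uᴴ) := by rw [hV, Matrix.one_mul]
      _ = V * Sig⁻¹ * Uᴴ := by rw [Matrix.mul_assoc]
    · rw [hXQ, conjTranspose_mul, conjTranspose_conjTranspose]
    · rw [hQX, conjTranspose_mul, conjTranspose_conjTranspose]
  have hPQ : P = Q := mp_unique hP hQmp
  -- basic identities
  have hUX : Uᴴ * X = Sig * Vᴴ := by
    rw [hSVD, ← Matrix.mul_assoc, ← Matrix.mul_assoc, hU, Matrix.one_mul]
  have hA : (Sig * Vᴴ) * (V * Sig⁻¹) = 1 := by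
    calc (Sig * Vᴴ) * (V * Sig⁻¹) = Sig * ((Vᴴ * V) * Sig⁻¹) := by
          simp only [Matrix.mul_assoc]
    _ = Sig * Sig⁻¹ := by rw [hV, Matrix.one_mul]
    _ = 1 := hS1
  have hAU : (Sig * Vᴴ) * Q = Uᴴ := by
    rw [hQdef, ← Matrix.mul_assoc, hA, Matrix.one_mul]
  have hc' : c = Q.mulVec (x (Fin.last m)) := by rw [hc, hPQ]
  -- the key matrix identity
  have key : (Sig * Vᴴ) * companion c = Uᴴ * Y := by
    ext i j
    rw [Matrix.mul_apply, Matrix.mul_apply]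
    by_cases hj : (j : ℕ) = m - 1
    · have hcomp : ∀ k : Fin m, companion c k j = c k := fun k => by
        simp [companion, hj]
      have hjsucc : j.succ = Fin.last m := by
        apply Fin.ext
        have := j.pos
        simp only [Fin.val_succ, hj, Fin.val_last]
        omega
      have hYj : ∀ k, Y k j = x (Fin.last m) k := fun k => by
        rw [hY, Matrix.of_apply, hjsucc]
      simp only [hcomp, hYj]
      calc ∑ k, (Sig * Vᴴ) i k * c k = ((Sig * Vᴴ) *ᵥ c) i := rfl
      _ = ((Sig * Vᴴ) *ᵥ (Q *ᵥ x (Fin.last m))) i := by rw [hc']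
      _ = (((Sig * Vᴴ) * Q) *ᵥ x (Fin.last m)) i := by rw [Matrix.mulVec_mulVec]
      _ = (Uᴴ *ᵥ x (Fin.last m)) i := by rw [hAU]
      _ = ∑ k, Uᴴ i k * x (Fin.last m) k := rfl
    · have hjlt : (j : ℕ) + 1 < m := by
        have := j.isLt
        omega
      set j' : Fin m := ⟨(j : ℕ) + 1, hjlt⟩ with hj'def
      have hcomp : ∀ k : Fin m, companion c k j = if k = j' then 1 else 0 :=
        fun k => by
          simp only [companion, Matrix.of_apply, if_neg hj]
          congr 1
          simp [hj'def, Fin.ext_iff]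
      have hXY : ∀ k, X k j' = Y k j := fun k => by
        have hcast : j'.castSucc = j.succ := Fin.ext (by simp [hj'def])
        rw [hX, hY, Matrix.of_apply, Matrix.of_apply, hcast]
      calc ∑ k, (Sig * Vᴴ) i k * companion c k j
          = ∑ k, (Sig * Vᴴ) i k * (if k = j' then 1 else 0) := by
            simp only [hcomp]
      _ = (Sig * Vᴴ) i j' := by simp
      _ = (Uᴴ * X) i j' := by rw [hUX]
      _ = ∑ k, Uᴴ i k * X k j' := Matrix.mul_apply
      _ = ∑ k, Uᴴ i k * Y k j := by
            exact Finset.sum_congr rfl fun k _ => by rw [hXY]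
  have part1 : S = (Sig * Vᴴ) * companion c * (V * Sig⁻¹) := by
    rw [hS, key]
  refine ⟨part1, fun hli => ?_⟩
  have hrm : r = m := by
    rw [← hr, rank_eq_finrank_span_cols]
    have hXt : Xᵀ = fun j : Fin m => x j.castSucc := by
      funext j i
      rw [Matrix.transpose_apply, hX, Matrix.of_apply]
    rw [show X.col = fun j : Fin m => x j.castSucc from hXt, finrank_span_eq_card hli, Fintype.card_fin]
  subst hrm
  refine ⟨rfl, Sig * Vᴴ, Matrix.isUnit_det_of_right_inverse hA, ?_⟩
  rw [Matrix.inv_eq_right_inv hA]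
  simpa using part1
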